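/- For every t ∈ [0,1], the function f₀(x) = e^{−x} on ℝ₊ majorizes g_t(x) = ((t+1)/2) e^{−x} (x − 1 + √((1−t)/(1+t)))² in the continuous sense. -/

import Mathlib

set_option maxHeartbeats 1000000

open MeasureTheory Set Real Filter Topology

noncomputable section
namespace F0M


/-- the cut integrand for the exponential -/
def M (u x : ℝ) : ℝ := max (Real.exp (-x) - u) 0

lemma M_nonneg (u x : ℝ) : 0 ≤ M u x := le_max_right _ _

lemma M_le_exp {u : ℝ} (hu : 0 ≤ u) (x : ℝ) : M u x ≤ Real.exp (-x) :=
  max_le (by linarith) (Real.exp_pos _).le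

lemma measurable_M (u : ℝ) : Measurable (M u) :=
  ((Real.measurable_exp.comp measurable_neg).sub measurable_const).max measurable_const

lemma integrableOn_exp_neg_Ioi (a : ℝ) :
    IntegrableOn (fun x => Real.exp (-x)) (Ioi a) := by
  have := exp_neg_integrableOn_Ioi a (b := 1) one_pos
  simpa using this

lemma integrableOn_exp_neg (a : ℝ) :
    IntegrableOn (fun x => Real.exp (-x)) (Ici a) := by
  rw [integrableOn_Ici_iff_integrableOn_Ioi]
  exact integrableOn_exp_neg_Ioi a

lemma integrableOn_M {u : ℝ} (hu : 0 ≤ u) {s : Set ℝ} (hs : s ⊆ Ici 0) :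
    IntegrableOn (M u) s := by
  refine ((integrableOn_exp_neg 0).mono_set hs).mono' ((measurable_M u).aestronglyMeasurable) ?_
  refine Filter.Eventually.of_forall fun x => ?_
  rw [Real.norm_eq_abs, abs_of_nonneg (M_nonneg u x)]
  exact M_le_exp hu x



lemma shift_Ici (φ : ℝ → ℝ) (a : ℝ) :
    ∫ x in Ici a, φ x = ∫ z in Ici (0:ℝ), φ (z + a) := by
  rw [← integral_indicator measurableSet_Ici, ← integral_indicator measurableSet_Ici,
    ← integral_add_right_eq_self (fun x => (Ici a).indicator φ x) a]
  congr 1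
  ext z
  simp only [indicator_apply, mem_Ici, le_add_iff_nonneg_left]

lemma hasDerivAt_exp_neg (x : ℝ) :
    HasDerivAt (fun a : ℝ => Real.exp (-a)) (-Real.exp (-x)) x := by
  simpa using (hasDerivAt_neg x).exp

lemma tendsto_exp_neg : Tendsto (fun x : ℝ => Real.exp (-x)) atTop (𝓝 0) := by
  simpa using Real.tendsto_exp_neg_atTop_nhds_zero

lemma weight_hasDeriv : ∀ x : ℝ, HasDerivAt (fun a : ℝ => -((a + 1) * Real.exp (-a)))
    (x * Real.exp (-x)) x := by
  intro x
  have h1 : HasDerivAt (fun a : ℝ => (a + 1) * Real.exp (-a))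
      (1 * Real.exp (-x) + (x + 1) * (-Real.exp (-x))) x :=
    ((hasDerivAt_id x).add_const 1).mul (hasDerivAt_exp_neg x)
  have := h1.neg
  exact this.congr_deriv (by ring)

lemma weight_tendsto : Tendsto (fun a : ℝ => -((a + 1) * Real.exp (-a))) atTop (𝓝 0) := by
  have t1 : Tendsto (fun a : ℝ => a ^ 1 * Real.exp (-a)) atTop (𝓝 0) :=
    tendsto_pow_mul_exp_neg_atTop_nhds_zero 1
  have := ((t1.add tendsto_exp_neg).neg)
  simpa using this.congr (fun a => by ring)

lemma integral_weight_Ioi : ∫ a in Ioi (0:ℝ), a * Real.exp (-a) = 1 := by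
  have := integral_Ioi_of_hasDerivAt_of_nonneg (a := (0:ℝ))
    (g := fun a : ℝ => -((a + 1) * Real.exp (-a))) (g' := fun a => a * Real.exp (-a))
    (weight_hasDeriv 0).continuousAt.continuousWithinAt (fun x hx => weight_hasDeriv x)
    (fun x hx => mul_nonneg (le_of_lt hx) (Real.exp_pos _).le) weight_tendsto
  simpa using this

lemma integrableOn_weight : IntegrableOn (fun a => a * Real.exp (-a)) (Ioi (0:ℝ)) :=
  integrableOn_Ioi_deriv_of_nonneg (weight_hasDeriv 0).continuousAt.continuousWithinAt
    (fun x hx => weight_hasDeriv x)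
    (fun x hx => mul_nonneg (le_of_lt hx) (Real.exp_pos _).le) weight_tendsto

section Params

variable {c₀ L : ℝ} (hc₀ : 0 < c₀) (hL : 0 ≤ L) (hc : c₀ * ((1 - L) ^ 2 + 1) = 1)

lemma hasDerivAt_Phi (x : ℝ) :
    HasDerivAt (fun y : ℝ => -(c₀ * Real.exp (-y) * ((y - L + 1) ^ 2 + 1)))
      (c₀ * Real.exp (-x) * (x - L) ^ 2) x := by
  have h1 : HasDerivAt (fun y : ℝ => ((y - L + 1) ^ 2 + 1)) (2 * (x - L + 1)) x := by
    have : HasDerivAt (fun y : ℝ => y - L + 1) 1 x :=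
      ((hasDerivAt_id x).sub_const L).add_const 1
    simpa using ((this.pow 2).add_const 1)
  have h2 : HasDerivAt (fun y : ℝ => Real.exp (-y) * ((y - L + 1) ^ 2 + 1))
      (-Real.exp (-x) * ((x - L + 1) ^ 2 + 1) + Real.exp (-x) * (2 * (x - L + 1))) x :=
    (hasDerivAt_exp_neg x).mul h1
  have h4 := (h2.const_mul c₀).neg
  simp only [← mul_assoc] at h4
  exact h4.congr_deriv (by ring)

lemma tendsto_Phi :
    Tendsto (fun y : ℝ => -(c₀ * Real.exp (-y) * ((y - L + 1) ^ 2 + 1))) atTop (𝓝 0) := by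
  have t2 : Tendsto (fun a : ℝ => a ^ 2 * Real.exp (-a)) atTop (𝓝 0) :=
    tendsto_pow_mul_exp_neg_atTop_nhds_zero 2
  have t1 : Tendsto (fun a : ℝ => a ^ 1 * Real.exp (-a)) atTop (𝓝 0) :=
    tendsto_pow_mul_exp_neg_atTop_nhds_zero 1
  have h := (((t2.const_mul c₀).add ((t1.const_mul (c₀ * (2 * (1 - L)))))).add
    (tendsto_exp_neg.const_mul (c₀ * ((1 - L) ^ 2 + 1)))).neg
  have h2 : Tendsto (fun a : ℝ =>
      -(c₀ * (a ^ 2 * Real.exp (-a)) + c₀ * (2 * (1 - L)) * (a ^ 1 * Real.exp (-a)) +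
        c₀ * ((1 - L) ^ 2 + 1) * Real.exp (-a))) atTop (𝓝 (-(c₀ * 0 + c₀ * (2 * (1 - L)) * 0 +
        c₀ * ((1 - L) ^ 2 + 1) * 0))) := h
  have h3 : Tendsto (fun y : ℝ => -(c₀ * Real.exp (-y) * ((y - L + 1) ^ 2 + 1))) atTop
      (𝓝 (-(c₀ * 0 + c₀ * (2 * (1 - L)) * 0 + c₀ * ((1 - L) ^ 2 + 1) * 0))) :=
    h2.congr (fun a => by ring)
  simpa using h3

include hc₀ hc in
lemma integral_g_Ioi : ∫ x in Ioi (0:ℝ), c₀ * Real.exp (-x) * (x - L) ^ 2 = 1 := by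
  have := integral_Ioi_of_hasDerivAt_of_nonneg (a := (0:ℝ))
    (g := fun y : ℝ => -(c₀ * Real.exp (-y) * ((y - L + 1) ^ 2 + 1)))
    (g' := fun x => c₀ * Real.exp (-x) * (x - L) ^ 2)
    (hasDerivAt_Phi 0).continuousAt.continuousWithinAt (fun x _ => hasDerivAt_Phi x)
    (fun x _ => by positivity) tendsto_Phi
  rw [this]
  simp only [Real.exp_zero, neg_zero, zero_sub, neg_neg, mul_one]
  nlinarith [hc]

include hc₀ in
lemma integrableOn_g : IntegrableOn (fun x => c₀ * Real.exp (-x) * (x - L) ^ 2) (Ici 0) := by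
  rw [integrableOn_Ici_iff_integrableOn_Ioi]
  exact integrableOn_Ioi_deriv_of_nonneg (hasDerivAt_Phi 0).continuousAt.continuousWithinAt
    (fun x _ => hasDerivAt_Phi x) (fun x _ => by positivity) tendsto_Phi

include hc₀ hc in
lemma integral_g_Ici : ∫ x in Ici (0:ℝ), c₀ * Real.exp (-x) * (x - L) ^ 2 = 1 := by
  rw [integral_Ici_eq_integral_Ioi]
  exact integral_g_Ioi hc₀ hc

lemma integral_w_Ioc {x : ℝ} (hx : x ≤ L) :
    ∫ p in Ioc x L, 2 * c₀ * (L - p) = c₀ * (L - x) ^ 2 := by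
  rw [← intervalIntegral.integral_of_le hx]
  have hd : ∀ p ∈ uIcc x L, HasDerivAt (fun p : ℝ => -(c₀ * (L - p) ^ 2))
      (2 * c₀ * (L - p)) p := by
    intro p _
    have h : HasDerivAt (fun p : ℝ => L - p) (-1) p := (hasDerivAt_id p).const_sub L
    have := ((h.pow 2).const_mul c₀).neg
    exact this.congr_deriv (by ring)
  rw [intervalIntegral.integral_eq_sub_of_hasDerivAt hd ((by fun_prop : Continuous (fun p : ℝ => 2 * c₀ * (L - p))).intervalIntegrable _ _)]
  ring

lemma integral_expw_Ioc (hL : 0 ≤ L) :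
    ∫ p in Ioc 0 L, Real.exp (-p) * (2 * c₀ * (L - p)) =
      2 * c₀ * (Real.exp (-L) - 1 + L) := by
  rw [← intervalIntegral.integral_of_le hL]
  have hd : ∀ p ∈ uIcc (0:ℝ) L, HasDerivAt (fun p : ℝ => 2 * c₀ * (Real.exp (-p) * (p - L + 1)))
      (Real.exp (-p) * (2 * c₀ * (L - p))) p := by
    intro p _
    have h : HasDerivAt (fun p : ℝ => Real.exp (-p) * (p - L + 1))
        (-Real.exp (-p) * (p - L + 1) + Real.exp (-p) * 1) p :=
      (hasDerivAt_exp_neg p).mul (((hasDerivAt_id p).sub_const L).add_const 1)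
    have := h.const_mul (2 * c₀)
    exact this.congr_deriv (by ring)
  rw [intervalIntegral.integral_eq_sub_of_hasDerivAt hd ((by fun_prop : Continuous (fun p : ℝ => Real.exp (-p) * (2 * c₀ * (L - p)))).intervalIntegrable _ _)]
  simp only [Real.exp_zero, neg_zero]
  ring

end Params



lemma swap_bound {S : Set ℝ} (hS : MeasurableSet S)
    (H : ℝ → ℝ → ℝ) (C : ℝ → ℝ)
    (hHm : Measurable (Function.uncurry H))
    (hH0 : ∀ x, ∀ p ∈ S, 0 ≤ H x p)
    (hC0 : ∀ p ∈ S, 0 ≤ C p)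
    (hCint : IntegrableOn C S)
    (hHint : ∀ p ∈ S, IntegrableOn (fun x => H x p) (Ici 0))
    (hCb : ∀ p ∈ S, (∫ x in Ici (0:ℝ), H x p) ≤ C p) :
    (∫ x in Ici (0:ℝ), ∫ p in S, H x p) ≤ ∫ p in S, C p := by
  have hHx : ∀ x, Measurable fun p => H x p := fun x => hHm.of_uncurry_left
  have h1 : ∀ x, (∫ p in S, H x p) = (∫⁻ p in S, ENNReal.ofReal (H x p)).toReal := fun x =>
    integral_eq_lintegral_of_nonneg_ae ((ae_restrict_mem hS).mono (hH0 x))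
      (hHx x).aestronglyMeasurable
  have hmeas : Measurable fun x => (∫⁻ p in S, ENNReal.ofReal (H x p)).toReal := by
    apply Measurable.ennreal_toReal
    exact Measurable.lintegral_prod_right (hHm.ennreal_ofReal)
  have h2 : (∫ x in Ici (0:ℝ), ∫ p in S, H x p) =
      (∫⁻ x in Ici (0:ℝ), ENNReal.ofReal ((∫⁻ p in S, ENNReal.ofReal (H x p)).toReal)).toReal := by
    simp_rw [h1]
    exact integral_eq_lintegral_of_nonneg_ae
      (Eventually.of_forall fun x => ENNReal.toReal_nonneg) hmeas.aestronglyMeasurable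
  have h3 : (∫⁻ x in Ici (0:ℝ), ENNReal.ofReal ((∫⁻ p in S, ENNReal.ofReal (H x p)).toReal)) ≤
      ∫⁻ x in Ici (0:ℝ), ∫⁻ p in S, ENNReal.ofReal (H x p) :=
    lintegral_mono fun x => ENNReal.ofReal_toReal_le
  have h4 : (∫⁻ x in Ici (0:ℝ), ∫⁻ p in S, ENNReal.ofReal (H x p)) =
      ∫⁻ p in S, ∫⁻ x in Ici (0:ℝ), ENNReal.ofReal (H x p) := by
    exact lintegral_lintegral_swap ((hHm.ennreal_ofReal).aemeasurable)
  have h5 : (∫⁻ p in S, ∫⁻ x in Ici (0:ℝ), ENNReal.ofReal (H x p)) ≤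
      ∫⁻ p in S, ENNReal.ofReal (C p) := by
    apply lintegral_mono_ae
    filter_upwards [ae_restrict_mem hS] with p hp
    have := ofReal_integral_eq_lintegral_ofReal (hHint p hp)
      (Eventually.of_forall fun x => hH0 x p hp)
    rw [← this]
    exact ENNReal.ofReal_le_ofReal (hCb p hp)
  have h6 : (∫⁻ p in S, ENNReal.ofReal (C p)) = ENNReal.ofReal (∫ p in S, C p) := by
    rw [ofReal_integral_eq_lintegral_ofReal hCint ((ae_restrict_mem hS).mono hC0)]
  rw [h2]
  calc (∫⁻ x in Ici (0:ℝ), ENNReal.ofReal ((∫⁻ p in S, ENNReal.ofReal (H x p)).toReal)).toReal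
      ≤ (ENNReal.ofReal (∫ p in S, C p)).toReal := by
        apply ENNReal.toReal_mono ENNReal.ofReal_ne_top
        exact le_trans h3 (le_trans (le_of_eq h4) (le_trans h5 (le_of_eq h6)))
    _ = ∫ p in S, C p := ENNReal.toReal_ofReal (setIntegral_nonneg hS hC0)





/-- the shifted exponential component -/
def j (a z : ℝ) : ℝ := if a ≤ z then Real.exp (a - z) else 0

lemma j_nonneg (a z : ℝ) : 0 ≤ j a z := by
  unfold j; split <;> positivity

lemma j_le (a z : ℝ) : j a z ≤ Real.exp a * Real.exp (-z) := by
  unfold j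
  rw [← Real.exp_add]
  split
  · exact le_of_eq (by rw [sub_eq_add_neg])
  · positivity

lemma measurable_j_z (a : ℝ) : Measurable fun z => j a z := by
  unfold j
  exact Measurable.ite measurableSet_Ici
    ((Real.measurable_exp.comp (measurable_const.sub measurable_id))) measurable_const

lemma measurable_j_a (z : ℝ) : Measurable fun a => j a z := by
  unfold j
  exact Measurable.ite measurableSet_Iic
    ((Real.measurable_exp.comp (measurable_id.sub measurable_const))) measurable_const

lemma max_j_eq (v a : ℝ) (hv : 0 ≤ v) :
    (fun z => max (j a z - v) 0) = fun z => (Ici a).indicator (fun z => M v (z - a)) z := by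
  funext z
  unfold j M
  by_cases h : a ≤ z
  · rw [if_pos h, indicator_of_mem (mem_Ici.2 h)]
    congr 2
    ring_nf
  · rw [if_neg h, indicator_of_notMem (fun hh => h (mem_Ici.1 hh))]
    simp [hv]

/-- integral of the cut shifted component equals the cut exponential integral -/
lemma integral_max_j (v : ℝ) (hv : 0 ≤ v) {a : ℝ} (ha : 0 ≤ a) :
    ∫ z in Ici (0:ℝ), max (j a z - v) 0 = ∫ x in Ici (0:ℝ), M v x := by
  rw [show (fun z => max (j a z - v) 0) = fun z => (Ici a).indicator (fun z => M v (z - a)) z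
    from max_j_eq v a hv]
  rw [setIntegral_indicator measurableSet_Ici]
  have : Ici (0:ℝ) ∩ Ici a = Ici a := by
    rw [Ici_inter_Ici, max_eq_right ha]
  rw [this, shift_Ici (fun z => M v (z - a)) a]
  simp

lemma j_le_one (a z : ℝ) : j a z ≤ 1 := by
  unfold j
  split
  · exact Real.exp_le_one_iff.2 (by linarith)
  · norm_num

lemma integrableOn_max_j (v : ℝ) (hv : 0 ≤ v) (a : ℝ) :
    IntegrableOn (fun z => max (j a z - v) 0) (Ici (0:ℝ)) := by
  refine Integrable.mono' ((integrableOn_exp_neg 0).const_mul (Real.exp a)) ?_ ?_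
  · exact (((measurable_j_z a).sub measurable_const).max measurable_const).aestronglyMeasurable
  · refine Eventually.of_forall fun z => ?_
    rw [Real.norm_eq_abs, abs_of_nonneg (le_max_right _ _)]
    exact max_le (by linarith [j_le a z]) (by positivity)

/-- identity: the parabola-exponential is a mixture of shifted exponentials -/
lemma mixture_identity {z : ℝ} (hz : 0 ≤ z) :
    ∫ a in Ioi (0:ℝ), j a z * (a * Real.exp (-a)) = Real.exp (-z) * z ^ 2 / 2 := by
  have hsplit : Ioi (0:ℝ) = Ioc 0 z ∪ Ioi z := (Ioc_union_Ioi_eq_Ioi hz).symm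
  have hdisj : Disjoint (Ioc (0:ℝ) z) (Ioi z) := Ioc_disjoint_Ioi le_rfl
  have h1 : ∀ a ∈ Ioc (0:ℝ) z, j a z * (a * Real.exp (-a)) = a * Real.exp (-z) := by
    intro a ha
    unfold j
    rw [if_pos ha.2, ← mul_assoc, mul_comm (Real.exp (a - z)) a, mul_assoc, ← Real.exp_add]
    congr 2
    ring
  have h2 : ∀ a ∈ Ioi z, j a z * (a * Real.exp (-a)) = 0 := by
    intro a ha
    unfold j
    rw [if_neg (not_le.2 ha), zero_mul]
  have i1 : IntegrableOn (fun a => j a z * (a * Real.exp (-a))) (Ioc 0 z) := by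
    refine IntegrableOn.congr_fun ?_ (fun a ha => (h1 a ha).symm) measurableSet_Ioc
    exact (continuous_id.mul continuous_const).integrableOn_Ioc
  have i2 : IntegrableOn (fun a => j a z * (a * Real.exp (-a))) (Ioi z) := by
    refine IntegrableOn.congr_fun ?_ (fun a ha => (h2 a ha).symm) measurableSet_Ioi
    exact integrableOn_zero
  rw [hsplit, setIntegral_union hdisj measurableSet_Ioi i1 i2]
  rw [setIntegral_congr_fun measurableSet_Ioc h1, setIntegral_congr_fun measurableSet_Ioi h2]
  simp only [integral_zero, add_zero]
  have : ∫ a in Ioc (0:ℝ) z, a * Real.exp (-z) = (∫ a in Ioc (0:ℝ) z, a) * Real.exp (-z) :=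
    integral_mul_const _ _
  rw [this, ← intervalIntegral.integral_of_le hz, integral_id]
  ring

lemma integrableOn_jw (z : ℝ) :
    IntegrableOn (fun a => j a z * (a * Real.exp (-a))) (Ioi (0:ℝ)) := by
  refine Integrable.mono' integrableOn_weight ?_ ?_
  · exact ((measurable_j_a z).mul (measurable_id.mul
      (Real.measurable_exp.comp measurable_neg))).aestronglyMeasurable
  · filter_upwards [ae_restrict_mem measurableSet_Ioi] with a ha
    have ha' : (0:ℝ) < a := ha
    have h0 : 0 ≤ a * Real.exp (-a) := by positivity
    rw [Real.norm_eq_abs, abs_of_nonneg (mul_nonneg (j_nonneg a z) h0)]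
    calc j a z * (a * Real.exp (-a)) ≤ 1 * (a * Real.exp (-a)) :=
          mul_le_mul_of_nonneg_right (j_le_one a z) h0
      _ = a * Real.exp (-a) := one_mul _

lemma measurable_maxjw (v : ℝ) :
    Measurable (Function.uncurry fun z a => max (j a z - v) 0 * (a * Real.exp (-a))) := by
  apply Measurable.mul
  · apply Measurable.max _ measurable_const
    apply Measurable.sub _ measurable_const
    unfold j
    exact Measurable.ite (measurableSet_le measurable_snd measurable_fst)
      (Real.measurable_exp.comp (measurable_snd.sub measurable_fst)) measurable_const
  · exact measurable_snd.mul (Real.measurable_exp.comp measurable_snd.neg)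

lemma integrableOn_g0 : IntegrableOn (fun z => Real.exp (-z) * z ^ 2 / 2) (Ici (0:ℝ)) := by
  have h := integrableOn_g (c₀ := 1/2) (L := 0) (by norm_num)
  exact h.congr_fun (fun a _ => by ring) measurableSet_Ici

/-- base case: e^{-z} z^2/2 is majorized -/
lemma base_case (v : ℝ) (hv : 0 ≤ v) :
    ∫ z in Ici (0:ℝ), max (Real.exp (-z) * z ^ 2 / 2 - v) 0 ≤ ∫ x in Ici (0:ℝ), M v x := by
  set F := ∫ x in Ici (0:ℝ), M v x with hF
  have hF0 : 0 ≤ F := setIntegral_nonneg measurableSet_Ici (fun x _ => M_nonneg v x)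
  set Ψ : ℝ → ℝ := fun z => ∫ a in Ioi (0:ℝ), max (j a z - v) 0 * (a * Real.exp (-a)) with hΨdef
  have hw0 : ∀ a : ℝ, a ∈ Ioi (0:ℝ) → 0 ≤ a * Real.exp (-a) := by
    intro a ha
    have : (0:ℝ) < a := ha
    positivity
  have imax : ∀ z : ℝ, IntegrableOn
      (fun a => max (j a z - v) 0 * (a * Real.exp (-a))) (Ioi (0:ℝ)) := by
    intro z
    refine Integrable.mono' integrableOn_weight ?_ ?_
    · exact ((((measurable_j_a z).sub measurable_const).max measurable_const).mul
        (measurable_id.mul (Real.measurable_exp.comp measurable_neg))).aestronglyMeasurable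
    · filter_upwards [ae_restrict_mem measurableSet_Ioi] with a ha
      rw [Real.norm_eq_abs, abs_of_nonneg (mul_nonneg (le_max_right _ _) (hw0 a ha))]
      calc max (j a z - v) 0 * (a * Real.exp (-a)) ≤ 1 * (a * Real.exp (-a)) := by
            refine mul_le_mul_of_nonneg_right ?_ (hw0 a ha)
            exact max_le (by linarith [j_le_one a z]) zero_le_one
        _ = a * Real.exp (-a) := one_mul _
  have hΨ0 : ∀ z, 0 ≤ Ψ z := fun z =>
    setIntegral_nonneg measurableSet_Ioi fun a ha => mul_nonneg (le_max_right _ _) (hw0 a ha)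
  have hΨle : ∀ z ∈ Ici (0:ℝ), Ψ z ≤ Real.exp (-z) * z ^ 2 / 2 := by
    intro z hz
    rw [← mixture_identity hz]
    refine setIntegral_mono_on (imax z) (integrableOn_jw z) measurableSet_Ioi ?_
    intro a ha
    exact mul_le_mul_of_nonneg_right (max_le (by linarith [j_nonneg a z]) (j_nonneg a z))
      (hw0 a ha)
  have key : ∀ z ∈ Ici (0:ℝ), max (Real.exp (-z) * z ^ 2 / 2 - v) 0 ≤ Ψ z := by
    intro z hz
    have isub : IntegrableOn (fun a => (j a z - v) * (a * Real.exp (-a))) (Ioi (0:ℝ)) := by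
      have h := (integrableOn_jw z).sub (integrableOn_weight.const_mul v)
      refine h.congr (Eventually.of_forall fun a => ?_)
      simp only [Pi.sub_apply]
      ring
    have hid : ∫ a in Ioi (0:ℝ), (j a z - v) * (a * Real.exp (-a)) =
        Real.exp (-z) * z ^ 2 / 2 - v := by
      have hcongr : ∫ a in Ioi (0:ℝ), (j a z - v) * (a * Real.exp (-a)) =
          ∫ a in Ioi (0:ℝ), (j a z * (a * Real.exp (-a)) - v * (a * Real.exp (-a))) :=
        setIntegral_congr_fun measurableSet_Ioi (fun a _ => by ring)
      rw [hcongr, integral_sub (integrableOn_jw z) (integrableOn_weight.const_mul v),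
        mixture_identity hz, integral_const_mul, integral_weight_Ioi, mul_one]
    have hle : ∫ a in Ioi (0:ℝ), (j a z - v) * (a * Real.exp (-a)) ≤ Ψ z := by
      refine setIntegral_mono_on isub (imax z) measurableSet_Ioi ?_
      intro a ha
      exact mul_le_mul_of_nonneg_right (le_max_left _ _) (hw0 a ha)
    rw [← hid]
    exact max_le hle (hΨ0 z)
  have hΨmeas : AEStronglyMeasurable Ψ (volume.restrict (Ici 0)) := by
    have := ((measurable_maxjw v).stronglyMeasurable).integral_prod_right
      (ν := volume.restrict (Ioi (0:ℝ)))
    exact this.aestronglyMeasurable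
  have hΨint : IntegrableOn Ψ (Ici (0:ℝ)) := by
    refine Integrable.mono' integrableOn_g0 hΨmeas ?_
    filter_upwards [ae_restrict_mem measurableSet_Ici] with z hz
    rw [Real.norm_eq_abs, abs_of_nonneg (hΨ0 z)]
    exact hΨle z hz
  have step1 : ∫ z in Ici (0:ℝ), max (Real.exp (-z) * z ^ 2 / 2 - v) 0 ≤
      ∫ z in Ici (0:ℝ), Ψ z := by
    refine setIntegral_mono_on ?_ hΨint measurableSet_Ici key
    have hm : Measurable fun z : ℝ => max (Real.exp (-z) * z ^ 2 / 2 - v) 0 := by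
      apply Measurable.max _ measurable_const
      apply Measurable.sub _ measurable_const
      exact ((Real.measurable_exp.comp measurable_neg).mul (measurable_id.pow_const 2)).div_const 2
    refine Integrable.mono' integrableOn_g0 hm.aestronglyMeasurable ?_
    refine Eventually.of_forall fun z => ?_
    rw [Real.norm_eq_abs, abs_of_nonneg (le_max_right _ _)]
    exact max_le (by nlinarith [sq_nonneg z, Real.exp_pos (-z)]) (by positivity)
  have step2 : ∫ z in Ici (0:ℝ), Ψ z ≤ ∫ a in Ioi (0:ℝ), F * (a * Real.exp (-a)) := by
    refine swap_bound measurableSet_Ioi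
      (fun z a => max (j a z - v) 0 * (a * Real.exp (-a)))
      (fun a => F * (a * Real.exp (-a))) (measurable_maxjw v) ?_ ?_ ?_ ?_ ?_
    · exact fun z a ha => mul_nonneg (le_max_right _ _) (hw0 a ha)
    · exact fun a ha => mul_nonneg hF0 (hw0 a ha)
    · exact integrableOn_weight.const_mul F
    · exact fun a _ => (integrableOn_max_j v hv a).mul_const _
    · intro a ha
      rw [integral_mul_const, integral_max_j v hv (le_of_lt ha)]
  have step3 : ∫ a in Ioi (0:ℝ), F * (a * Real.exp (-a)) = F := by
    rw [integral_const_mul, integral_weight_Ioi, mul_one]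
  linarith



/-- the tail bump -/
def tl (c₀ L x : ℝ) : ℝ := if L ≤ x then c₀ * Real.exp (-x) * (x - L) ^ 2 else 0

/-- the mixture component -/
def k (c₀ L p x : ℝ) : ℝ :=
  (if x < p then Real.exp (-x) else 0) +
    Real.exp (-p) / (2 * c₀ * Real.exp (-L)) * tl c₀ L x

lemma tl_nonneg {c₀ : ℝ} (hc₀ : 0 < c₀) (L x : ℝ) : 0 ≤ tl c₀ L x := by
  unfold tl; split <;> positivity

lemma k_nonneg {c₀ : ℝ} (hc₀ : 0 < c₀) (L p x : ℝ) : 0 ≤ k c₀ L p x := by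
  unfold k
  have h1 : (0:ℝ) ≤ if x < p then Real.exp (-x) else 0 := by split <;> positivity
  have h2 := tl_nonneg hc₀ L x
  have : (0:ℝ) ≤ Real.exp (-p) / (2 * c₀ * Real.exp (-L)) := by positivity
  nlinarith

lemma measurable_tl (c₀ L : ℝ) : Measurable (tl c₀ L) := by
  unfold tl
  exact Measurable.ite measurableSet_Ici
    (((Real.measurable_exp.comp measurable_neg).const_mul c₀).mul
      ((measurable_id.sub measurable_const).pow_const 2)) measurable_const

lemma measurable_k_x (c₀ L p : ℝ) : Measurable (k c₀ L p) := by
  unfold k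
  exact (Measurable.ite measurableSet_Iio (Real.measurable_exp.comp measurable_neg)
    measurable_const).add ((measurable_tl c₀ L).const_mul _)

lemma scale_M (β u : ℝ) (hβ : 0 < β) (z : ℝ) :
    β * M (u / β) z = max (β * Real.exp (-z) - u) 0 := by
  unfold M
  rw [mul_max_of_nonneg _ _ hβ.le, mul_zero, mul_sub, mul_div_cancel₀ _ (ne_of_gt hβ)]

/-- integrability of the scaled tail cut -/
lemma integrableOn_max_tail {c₀ L u c : ℝ} (hc₀ : 0 < c₀) (hL : 0 ≤ L) (hc : 0 ≤ c)
    (hu : 0 ≤ u) :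
    IntegrableOn (fun x => max (c * tl c₀ L x - u) 0) (Ici (0:ℝ)) := by
  refine Integrable.mono' ((integrableOn_g (c₀ := c₀) (L := L) hc₀).const_mul c)
    ((((measurable_tl c₀ L).const_mul c).sub measurable_const).max
      measurable_const).aestronglyMeasurable ?_
  refine Eventually.of_forall fun x => ?_
  rw [Real.norm_eq_abs, abs_of_nonneg (le_max_right _ _)]
  have h1 : tl c₀ L x ≤ c₀ * Real.exp (-x) * (x - L) ^ 2 := by
    unfold tl; split
    · exact le_rfl
    · positivity
  refine max_le ?_ (by positivity)
  calc c * tl c₀ L x - u ≤ c * tl c₀ L x := by linarith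
    _ ≤ c * (c₀ * Real.exp (-x) * (x - L) ^ 2) := mul_le_mul_of_nonneg_left h1 hc

/-- the tail part of a component is dominated by the cut exponential from `p` on -/
lemma tail_bound {c₀ L u p : ℝ} (hc₀ : 0 < c₀) (hL : 0 ≤ L) (hu : 0 ≤ u) (hp : 0 ≤ p) :
    ∫ x in Ici L, max (Real.exp (-p) / (2 * c₀ * Real.exp (-L)) *
        (c₀ * Real.exp (-x) * (x - L) ^ 2) - u) 0 ≤ ∫ x in Ici p, M u x := by
  have hβ : 0 < Real.exp (-p) := Real.exp_pos _
  -- step a: shift the left side to start at 0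
  have ha : ∫ x in Ici L, max (Real.exp (-p) / (2 * c₀ * Real.exp (-L)) *
      (c₀ * Real.exp (-x) * (x - L) ^ 2) - u) 0 =
      ∫ z in Ici (0:ℝ), max (Real.exp (-p) * (Real.exp (-z) * z ^ 2 / 2) - u) 0 := by
    rw [shift_Ici (fun x => max (Real.exp (-p) / (2 * c₀ * Real.exp (-L)) *
      (c₀ * Real.exp (-x) * (x - L) ^ 2) - u) 0) L]
    refine setIntegral_congr_fun measurableSet_Ici fun z _ => ?_
    have he : Real.exp (-(z + L)) = Real.exp (-z) * Real.exp (-L) := by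
      rw [← Real.exp_add]; ring_nf
    congr 1
    rw [he]
    have h2 : c₀ * (Real.exp (-z) * Real.exp (-L)) * (z + L - L) ^ 2 =
        c₀ * Real.exp (-L) * (Real.exp (-z) * z ^ 2) := by ring
    rw [h2]
    field_simp
  -- step b/c: scale and use the base case
  have hb : ∫ z in Ici (0:ℝ), max (Real.exp (-p) * (Real.exp (-z) * z ^ 2 / 2) - u) 0 ≤
      ∫ z in Ici (0:ℝ), max (Real.exp (-p) * Real.exp (-z) - u) 0 := by
    have h1 : ∀ z : ℝ, max (Real.exp (-p) * (Real.exp (-z) * z ^ 2 / 2) - u) 0 =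
        Real.exp (-p) * max (Real.exp (-z) * z ^ 2 / 2 - u / Real.exp (-p)) 0 := by
      intro z
      rw [mul_max_of_nonneg _ _ hβ.le, mul_zero, mul_sub,
        mul_div_cancel₀ _ (ne_of_gt hβ)]
    have h2 : ∀ z : ℝ, max (Real.exp (-p) * Real.exp (-z) - u) 0 =
        Real.exp (-p) * M (u / Real.exp (-p)) z := fun z => (scale_M _ u hβ z).symm
    simp_rw [h1, h2]
    rw [integral_const_mul, integral_const_mul]
    exact mul_le_mul_of_nonneg_left (base_case (u / Real.exp (-p)) (by positivity)) hβ.le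
  -- step d: shift the right side
  have hd : ∫ x in Ici p, M u x = ∫ z in Ici (0:ℝ), max (Real.exp (-p) * Real.exp (-z) - u) 0 := by
    rw [shift_Ici (M u) p]
    refine setIntegral_congr_fun measurableSet_Ici fun z _ => ?_
    unfold M
    congr 2
    rw [← Real.exp_add]
    ring_nf
  rw [ha, hd]
  exact hb

/-- each component is majorized by the exponential -/
lemma component_bound {c₀ L u p : ℝ} (hc₀ : 0 < c₀) (hL : 0 ≤ L) (hu : 0 ≤ u)
    (hp0 : 0 ≤ p) (hpL : p ≤ L) :
    ∫ x in Ici (0:ℝ), max (k c₀ L p x - u) 0 ≤ ∫ x in Ici (0:ℝ), M u x := by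
  set c := Real.exp (-p) / (2 * c₀ * Real.exp (-L)) with hcdef
  have hcpos : 0 < c := by positivity
  -- pointwise split
  have hsplit : ∀ x : ℝ, max (k c₀ L p x - u) 0 =
      (Iio p).indicator (M u) x + max (c * tl c₀ L x - u) 0 := by
    intro x
    unfold k tl M
    rcases lt_or_ge x p with h | h
    · have hxL : ¬ L ≤ x := by push_neg; linarith
      rw [if_pos h, if_neg hxL, indicator_of_mem (mem_Iio.2 h)]
      simp [hxL, hu]
    · rw [if_neg (not_lt.2 h), indicator_of_notMem (fun hh => absurd (mem_Iio.1 hh) (not_lt.2 h))]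
      split
      · simp [hcdef]
      · simp [hu]
  simp_rw [hsplit]
  have hi1 : IntegrableOn (fun x => (Iio p).indicator (M u) x) (Ici (0:ℝ)) :=
    (integrableOn_M hu (le_refl _)).indicator measurableSet_Iio
  have hi2 : IntegrableOn (fun x => max (c * tl c₀ L x - u) 0) (Ici (0:ℝ)) :=
    integrableOn_max_tail hc₀ hL hcpos.le hu
  rw [integral_add hi1 hi2]
  -- first piece
  have e1 : ∫ x in Ici (0:ℝ), (Iio p).indicator (M u) x = ∫ x in Ico 0 p, M u x := by
    rw [setIntegral_indicator measurableSet_Iio, Ici_inter_Iio]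
  -- second piece
  have e2 : ∫ x in Ici (0:ℝ), max (c * tl c₀ L x - u) 0 =
      ∫ x in Ici L, max (c * (c₀ * Real.exp (-x) * (x - L) ^ 2) - u) 0 := by
    have : ∀ x : ℝ, max (c * tl c₀ L x - u) 0 =
        (Ici L).indicator (fun x => max (c * (c₀ * Real.exp (-x) * (x - L) ^ 2) - u) 0) x := by
      intro x
      unfold tl
      by_cases h : L ≤ x
      · rw [if_pos h, indicator_of_mem (mem_Ici.2 h)]
      · rw [if_neg h, indicator_of_notMem (fun hh => h (mem_Ici.1 hh))]
        simp [hu]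
    simp_rw [this]
    rw [setIntegral_indicator measurableSet_Ici, Ici_inter_Ici, max_eq_right hL]
  have e3 : ∫ x in Ici L, max (c * (c₀ * Real.exp (-x) * (x - L) ^ 2) - u) 0 ≤
      ∫ x in Ici p, M u x := tail_bound hc₀ hL hu hp0
  have hdisj : Disjoint (Ico (0:ℝ) p) (Ici p) := by
    rw [Set.disjoint_left]
    intro x hx hx2
    exact absurd hx.2 (not_lt.2 hx2)
  have e4 : (∫ x in Ico 0 p, M u x) + ∫ x in Ici p, M u x = ∫ x in Ici (0:ℝ), M u x := by
    rw [← Ico_union_Ici_eq_Ici hp0]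
    exact (setIntegral_union hdisj measurableSet_Ici
      ((integrableOn_M hu (le_refl _)).mono_set Ico_subset_Ici_self)
      ((integrableOn_M hu (le_refl _)).mono_set (Ici_subset_Ici.2 hp0))).symm
  calc (∫ x in Ici (0:ℝ), (Iio p).indicator (M u) x) +
      ∫ x in Ici (0:ℝ), max (c * tl c₀ L x - u) 0
      ≤ (∫ x in Ico 0 p, M u x) + ∫ x in Ici p, M u x := by
        rw [e1, e2]; exact add_le_add le_rfl e3
    _ = ∫ x in Ici (0:ℝ), M u x := e4



lemma integrableOn_Ioc_of_bounded {f : ℝ → ℝ} {a b C : ℝ}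
    (hm : AEStronglyMeasurable f (volume.restrict (Ioc a b)))
    (hb : ∀ p ∈ Ioc a b, |f p| ≤ C) : IntegrableOn f (Ioc a b) := by
  refine Integrable.mono' (g := fun _ => C) ?_ hm ?_
  · exact integrableOn_const measure_Ioc_lt_top.ne
  · filter_upwards [ae_restrict_mem measurableSet_Ioc] with p hp
    simpa using hb p hp

lemma tl_le (c₀ L x : ℝ) (hc₀ : 0 < c₀) : tl c₀ L x ≤ c₀ * Real.exp (-x) * (x - L) ^ 2 := by
  unfold tl; split
  · exact le_rfl
  · positivity

lemma k_le {c₀ L p x : ℝ} (hc₀ : 0 < c₀) (hp : 0 ≤ p) :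
    k c₀ L p x ≤ Real.exp (-x) + 1 / (2 * c₀ * Real.exp (-L)) * tl c₀ L x := by
  unfold k
  have h1 : (if x < p then Real.exp (-x) else 0) ≤ Real.exp (-x) := by
    split
    · exact le_rfl
    · positivity
  have hZ : 0 < 2 * c₀ * Real.exp (-L) := by positivity
  have h2 : Real.exp (-p) / (2 * c₀ * Real.exp (-L)) ≤ 1 / (2 * c₀ * Real.exp (-L)) :=
    (div_le_div_iff_of_pos_right hZ).2 (Real.exp_le_one_iff.2 (by linarith))
  exact add_le_add h1 (mul_le_mul_of_nonneg_right h2 (tl_nonneg hc₀ L x))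

lemma integrableOn_k_dom {c₀ L : ℝ} (hc₀ : 0 < c₀) :
    IntegrableOn (fun x => Real.exp (-x) +
      1 / (2 * c₀ * Real.exp (-L)) * (c₀ * Real.exp (-x) * (x - L) ^ 2)) (Ici (0:ℝ)) :=
  (integrableOn_exp_neg 0).add ((integrableOn_g hc₀).const_mul _)

lemma integrableOn_max_k {c₀ L u p : ℝ} (hc₀ : 0 < c₀) (hu : 0 ≤ u) (hp : 0 ≤ p) :
    IntegrableOn (fun x => max (k c₀ L p x - u) 0) (Ici (0:ℝ)) := by
  refine Integrable.mono' (integrableOn_k_dom (L := L) hc₀)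
    (((measurable_k_x c₀ L p).sub measurable_const).max measurable_const).aestronglyMeasurable ?_
  refine Eventually.of_forall fun x => ?_
  rw [Real.norm_eq_abs, abs_of_nonneg (le_max_right _ _)]
  refine max_le ?_ ?_
  · have h1 := k_le (L := L) (x := x) hc₀ hp
    have h2 := tl_le c₀ L x hc₀
    have h3 : (0:ℝ) ≤ 1 / (2 * c₀ * Real.exp (-L)) := by positivity
    nlinarith [mul_le_mul_of_nonneg_left h2 h3]
  · have := Real.exp_pos (-x)
    have h2 : 0 ≤ c₀ * Real.exp (-x) * (x - L) ^ 2 := by positivity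
    have h3 : (0:ℝ) ≤ 1 / (2 * c₀ * Real.exp (-L)) := by positivity
    nlinarith

/-- the main abstract inequality -/
lemma main_ineq {c₀ L : ℝ} (hc₀ : 0 < c₀) (hL0 : 0 ≤ L) (hL1 : L ≤ 1)
    (hc : c₀ * ((1 - L) ^ 2 + 1) = 1) {u : ℝ} (hu : 0 ≤ u) :
    ∫ x in Ici (0:ℝ), max (c₀ * Real.exp (-x) * (x - L) ^ 2 - u) 0 ≤
      ∫ x in Ici (0:ℝ), M u x := by
  set F := ∫ x in Ici (0:ℝ), M u x with hFdef
  have hF0 : 0 ≤ F := setIntegral_nonneg measurableSet_Ici fun x _ => M_nonneg u x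
  set Z := 2 * c₀ * Real.exp (-L) with hZdef
  have hZ : 0 < Z := by positivity
  set q₀ := c₀ * L ^ 2 with hq₀def
  have hq₀0 : 0 ≤ q₀ := by positivity
  have hq₀1 : q₀ ≤ 1 := by nlinarith
  set w : ℝ → ℝ := fun p => 2 * c₀ * (L - p) with hwdef
  have hw0 : ∀ p ∈ Ioc (0:ℝ) L, 0 ≤ w p := fun p hp => by
    have := hp.2; simp only [hwdef]; nlinarith
  have hwle : ∀ p ∈ Ioc (0:ℝ) L, w p ≤ 2 * c₀ * L := fun p hp => by
    have := hp.1; simp only [hwdef]; nlinarith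
  have hmass : ∫ p in Ioc (0:ℝ) L, w p = q₀ := by
    have := integral_w_Ioc (c₀ := c₀) (L := L) (x := 0) hL0
    simpa using this
  have hwint : IntegrableOn w (Ioc (0:ℝ) L) := by
    refine integrableOn_Ioc_of_bounded (C := 2 * c₀ * L) ?_ ?_
    · rw [hwdef]
      exact (continuous_const.mul (continuous_const.sub continuous_id)).aestronglyMeasurable
    · intro p hp
      rw [abs_of_nonneg (hw0 p hp)]
      exact hwle p hp
  -- measurability of k in p
  have hkp_meas : ∀ x : ℝ, Measurable fun p => k c₀ L p x := by
    intro x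
    unfold k
    apply Measurable.add
    · exact Measurable.ite measurableSet_Ioi measurable_const measurable_const
    · exact ((Real.measurable_exp.comp measurable_neg).div_const _).mul_const _
  have hk_bd : ∀ x : ℝ, 0 ≤ x → ∀ p ∈ Ioc (0:ℝ) L, k c₀ L p x ≤ Real.exp (-x) + 1 / Z * tl c₀ L x :=
    fun x _ p hp => k_le hc₀ hp.1.le
  -- integrability in p of the pieces, for fixed x
  have hint1 : ∀ x : ℝ, IntegrableOn (fun p => (if x < p then Real.exp (-x) else 0) * w p)
      (Ioc (0:ℝ) L) := by
    intro x
    refine integrableOn_Ioc_of_bounded (C := Real.exp (-x) * (2 * c₀ * L)) ?_ ?_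
    · exact ((Measurable.ite measurableSet_Ioi measurable_const measurable_const).mul
        (measurable_const.mul (measurable_const.sub measurable_id))).aestronglyMeasurable
    · intro p hp
      have h1 : (0:ℝ) ≤ if x < p then Real.exp (-x) else 0 := by split <;> positivity
      have h2 : (if x < p then Real.exp (-x) else 0) ≤ Real.exp (-x) := by
        split
        · exact le_rfl
        · positivity
      rw [abs_of_nonneg (mul_nonneg h1 (hw0 p hp))]
      have := hw0 p hp
      have := hwle p hp
      nlinarith [Real.exp_pos (-x)]
  have hint2 : ∀ x : ℝ, IntegrableOn (fun p => (Real.exp (-p) / Z * tl c₀ L x) * w p)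
      (Ioc (0:ℝ) L) := by
    intro x
    refine integrableOn_Ioc_of_bounded (C := 1 / Z * tl c₀ L x * (2 * c₀ * L)) ?_ ?_
    · exact ((((Real.measurable_exp.comp measurable_neg).div_const _).mul_const _).mul
        (measurable_const.mul (measurable_const.sub measurable_id))).aestronglyMeasurable
    · intro p hp
      have htl := tl_nonneg hc₀ L x
      have he1 : Real.exp (-p) ≤ 1 := Real.exp_le_one_iff.2 (by linarith [hp.1])
      have he0 : 0 < Real.exp (-p) := Real.exp_pos _
      have hc1 : Real.exp (-p) / Z ≤ 1 / Z := (div_le_div_iff_of_pos_right hZ).2 he1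
      have hc0 : 0 ≤ Real.exp (-p) / Z := by positivity
      rw [abs_of_nonneg (mul_nonneg (mul_nonneg hc0 htl) (hw0 p hp))]
      have hwp0 := hw0 p hp
      have hwpl := hwle p hp
      have h1Z : (0:ℝ) ≤ 1 / Z := by positivity
      calc Real.exp (-p) / Z * tl c₀ L x * w p ≤ 1 / Z * tl c₀ L x * w p :=
            mul_le_mul_of_nonneg_right (mul_le_mul_of_nonneg_right hc1 htl) hwp0
        _ ≤ 1 / Z * tl c₀ L x * (2 * c₀ * L) :=
            mul_le_mul_of_nonneg_left hwpl (mul_nonneg h1Z htl)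
  have hkwint : ∀ x : ℝ, IntegrableOn (fun p => k c₀ L p x * w p) (Ioc (0:ℝ) L) := by
    intro x
    have h := (hint1 x).add (hint2 x)
    refine h.congr (Eventually.of_forall fun p => ?_)
    simp only [Pi.add_apply]
    unfold k
    ring
  have hmaxint : ∀ x : ℝ, IntegrableOn (fun p => max (k c₀ L p x - u) 0 * w p)
      (Ioc (0:ℝ) L) := by
    intro x
    refine integrableOn_Ioc_of_bounded
      (C := (Real.exp (-x) + 1 / Z * tl c₀ L x) * (2 * c₀ * L)) ?_ ?_
    · refine Measurable.aestronglyMeasurable ?_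
      refine Measurable.mul ?_ (measurable_const.mul (measurable_const.sub measurable_id))
      exact ((hkp_meas x).sub measurable_const).max measurable_const
    · intro p hp
      have hk0 := k_nonneg hc₀ L p x
      have hkle := k_le (L := L) (x := x) hc₀ hp.1.le
      have htl0 := tl_nonneg hc₀ L x
      have h1Z0 : (0:ℝ) ≤ 1 / Z := by positivity
      have hdom0 : (0:ℝ) ≤ Real.exp (-x) + 1 / Z * tl c₀ L x :=
        add_nonneg (Real.exp_pos _).le (mul_nonneg h1Z0 htl0)
      have hmx : max (k c₀ L p x - u) 0 ≤ Real.exp (-x) + 1 / Z * tl c₀ L x :=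
        max_le (by linarith) hdom0
      have hm0 : (0:ℝ) ≤ max (k c₀ L p x - u) 0 := le_max_right _ _
      rw [abs_of_nonneg (mul_nonneg hm0 (hw0 p hp))]
      have := hw0 p hp
      have := hwle p hp
      have htl := tl_nonneg hc₀ L x
      have h1Z : (0:ℝ) ≤ 1 / Z := by positivity
      nlinarith [Real.exp_pos (-x)]
  -- the identity
  have hI1 : ∀ x : ℝ, 0 ≤ x →
      ∫ p in Ioc (0:ℝ) L, (if x < p then Real.exp (-x) else 0) * w p =
        (if x < L then c₀ * Real.exp (-x) * (x - L) ^ 2 else 0) := by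
    intro x hx
    rcases lt_or_ge x L with hxL | hxL
    · rw [if_pos hxL]
      have hsplit : Ioc (0:ℝ) L = Ioc 0 x ∪ Ioc x L := (Ioc_union_Ioc_eq_Ioc hx hxL.le).symm
      have hdisj : Disjoint (Ioc (0:ℝ) x) (Ioc x L) := Ioc_disjoint_Ioc_of_le le_rfl
      have i1 : IntegrableOn (fun p => (if x < p then Real.exp (-x) else 0) * w p)
          (Ioc (0:ℝ) x) := (hint1 x).mono_set (by rw [hsplit]; exact subset_union_left)
      have i2 : IntegrableOn (fun p => (if x < p then Real.exp (-x) else 0) * w p)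
          (Ioc x L) := (hint1 x).mono_set (by rw [hsplit]; exact subset_union_right)
      rw [hsplit, setIntegral_union hdisj measurableSet_Ioc i1 i2]
      have e1 : ∫ p in Ioc (0:ℝ) x, (if x < p then Real.exp (-x) else 0) * w p = 0 := by
        rw [setIntegral_congr_fun measurableSet_Ioc
          (fun p hp => by rw [if_neg (not_lt.2 hp.2), zero_mul])]
        exact integral_zero _ _
      have e2 : ∫ p in Ioc x L, (if x < p then Real.exp (-x) else 0) * w p =
          Real.exp (-x) * (c₀ * (L - x) ^ 2) := by
        rw [setIntegral_congr_fun measurableSet_Ioc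
          (fun p hp => by rw [if_pos hp.1]), integral_const_mul,
          integral_w_Ioc (c₀ := c₀) hxL.le]
      rw [e1, e2]
      ring
    · rw [if_neg (not_lt.2 hxL)]
      rw [setIntegral_congr_fun measurableSet_Ioc
        (fun p hp => by rw [if_neg (not_lt.2 (le_trans hp.2 hxL)), zero_mul])]
      exact integral_zero _ _
  have hI2 : ∀ x : ℝ,
      ∫ p in Ioc (0:ℝ) L, (Real.exp (-p) / Z * tl c₀ L x) * w p =
        2 * c₀ * (Real.exp (-L) - 1 + L) / Z * tl c₀ L x := by
    intro x
    have : ∀ p : ℝ, (Real.exp (-p) / Z * tl c₀ L x) * w p =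
        tl c₀ L x / Z * (Real.exp (-p) * w p) := fun p => by ring
    simp_rw [this]
    rw [integral_const_mul, integral_expw_Ioc (c₀ := c₀) hL0]
    ring
  have hkey : 1 - q₀ + 2 * c₀ * (Real.exp (-L) - 1 + L) = Z := by
    rw [hZdef, hq₀def]
    nlinarith
  have hk0 : ∀ x : ℝ, 0 ≤ x → k c₀ L 0 x = 1 / Z * tl c₀ L x := by
    intro x hx
    unfold k
    rw [if_neg (not_lt.2 hx), neg_zero, Real.exp_zero, zero_add, hZdef]
  have hI : ∀ x : ℝ, 0 ≤ x →
      ∫ p in Ioc (0:ℝ) L, k c₀ L p x * w p =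
        c₀ * Real.exp (-x) * (x - L) ^ 2 - (1 - q₀) * k c₀ L 0 x := by
    intro x hx
    have e0 : ∫ p in Ioc (0:ℝ) L, k c₀ L p x * w p =
        (∫ p in Ioc (0:ℝ) L, (if x < p then Real.exp (-x) else 0) * w p) +
          ∫ p in Ioc (0:ℝ) L, (Real.exp (-p) / Z * tl c₀ L x) * w p := by
      rw [← integral_add (hint1 x) (hint2 x)]
      refine setIntegral_congr_fun measurableSet_Ioc fun p _ => ?_
      unfold k
      rw [hZdef]
      ring
    rw [e0, hI1 x hx, hI2 x, hk0 x hx]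
    rcases lt_or_ge x L with hxL | hxL
    · have htl0 : tl c₀ L x = 0 := by unfold tl; rw [if_neg (not_le.2 hxL)]
      rw [if_pos hxL, htl0]
      ring
    · have htl : tl c₀ L x = c₀ * Real.exp (-x) * (x - L) ^ 2 := by
        unfold tl; rw [if_pos hxL]
      rw [if_neg (not_lt.2 hxL), htl]
      have hZne : Z ≠ 0 := ne_of_gt hZ
      have hE : 2 * c₀ * (Real.exp (-L) - 1 + L) = Z - (1 - q₀) := by linarith
      rw [hE]
      field_simp
      ring
  -- Jensen step
  have hmax : ∀ x ∈ Ici (0:ℝ), max (c₀ * Real.exp (-x) * (x - L) ^ 2 - u) 0 ≤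
      (1 - q₀) * max (k c₀ L 0 x - u) 0 +
        ∫ p in Ioc (0:ℝ) L, max (k c₀ L p x - u) 0 * w p := by
    intro x hx
    have hx0 : (0:ℝ) ≤ x := hx
    have hsub : ∫ p in Ioc (0:ℝ) L, (k c₀ L p x - u) * w p =
        (c₀ * Real.exp (-x) * (x - L) ^ 2 - (1 - q₀) * k c₀ L 0 x) - u * q₀ := by
      have e0 : ∫ p in Ioc (0:ℝ) L, (k c₀ L p x - u) * w p =
          ∫ p in Ioc (0:ℝ) L, (k c₀ L p x * w p - u * w p) :=
        setIntegral_congr_fun measurableSet_Ioc fun p _ => by ring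
      rw [e0, integral_sub (hkwint x) (hwint.const_mul u), hI x hx0, integral_const_mul, hmass]
    have hle1 : ∫ p in Ioc (0:ℝ) L, (k c₀ L p x - u) * w p ≤
        ∫ p in Ioc (0:ℝ) L, max (k c₀ L p x - u) 0 * w p := by
      have isub : IntegrableOn (fun p => (k c₀ L p x - u) * w p) (Ioc (0:ℝ) L) := by
        have h := (hkwint x).sub (hwint.const_mul u)
        refine h.congr (Eventually.of_forall fun p => ?_)
        simp only [Pi.sub_apply]
        ring
      refine setIntegral_mono_on isub (hmaxint x) measurableSet_Ioc fun p hp => ?_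
      exact mul_le_mul_of_nonneg_right (le_max_left _ _) (hw0 p hp)
    have hpos : 0 ≤ (1 - q₀) * max (k c₀ L 0 x - u) 0 +
        ∫ p in Ioc (0:ℝ) L, max (k c₀ L p x - u) 0 * w p := by
      have h1 : 0 ≤ (1 - q₀) * max (k c₀ L 0 x - u) 0 :=
        mul_nonneg (by linarith) (le_max_right _ _)
      have h2 : 0 ≤ ∫ p in Ioc (0:ℝ) L, max (k c₀ L p x - u) 0 * w p :=
        setIntegral_nonneg measurableSet_Ioc fun p hp =>
          mul_nonneg (le_max_right _ _) (hw0 p hp)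
      linarith
    refine max_le ?_ hpos
    have h3 : (1 - q₀) * (k c₀ L 0 x - u) ≤ (1 - q₀) * max (k c₀ L 0 x - u) 0 :=
      mul_le_mul_of_nonneg_left (le_max_left _ _) (by linarith)
    have h4 : c₀ * Real.exp (-x) * (x - L) ^ 2 - u =
        (1 - q₀) * (k c₀ L 0 x - u) + ∫ p in Ioc (0:ℝ) L, (k c₀ L p x - u) * w p := by
      rw [hsub]
      ring
    linarith
  -- outer integration
  set Ψ : ℝ → ℝ := fun x => ∫ p in Ioc (0:ℝ) L, max (k c₀ L p x - u) 0 * w p with hΨdef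
  have hjm : Measurable (Function.uncurry fun x p => max (k c₀ L p x - u) 0 * w p) := by
    apply Measurable.mul
    · apply Measurable.max _ measurable_const
      apply Measurable.sub _ measurable_const
      unfold k
      apply Measurable.add
      · exact Measurable.ite (measurableSet_lt measurable_fst measurable_snd)
          (Real.measurable_exp.comp measurable_fst.neg) measurable_const
      · exact (((Real.measurable_exp.comp measurable_snd.neg).div_const _)).mul
          ((measurable_tl c₀ L).comp measurable_fst)
    · exact measurable_const.mul (measurable_const.sub measurable_snd)
  have hΨmeas : AEStronglyMeasurable Ψ (volume.restrict (Ici 0)) :=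
    (hjm.stronglyMeasurable.integral_prod_right
      (ν := volume.restrict (Ioc (0:ℝ) L))).aestronglyMeasurable
  have hΨ0 : ∀ x, 0 ≤ Ψ x := fun x =>
    setIntegral_nonneg measurableSet_Ioc fun p hp =>
      mul_nonneg (le_max_right _ _) (hw0 p hp)
  have hΨle : ∀ x ∈ Ici (0:ℝ), Ψ x ≤ c₀ * Real.exp (-x) * (x - L) ^ 2 := by
    intro x hx
    have hx0 : (0:ℝ) ≤ x := hx
    have h1 : Ψ x ≤ ∫ p in Ioc (0:ℝ) L, k c₀ L p x * w p := by
      refine setIntegral_mono_on (hmaxint x) (hkwint x) measurableSet_Ioc fun p hp => ?_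
      refine mul_le_mul_of_nonneg_right ?_ (hw0 p hp)
      exact max_le (by linarith [k_nonneg hc₀ L p x]) (k_nonneg hc₀ L p x)
    rw [hI x hx0] at h1
    have hk00 : 0 ≤ k c₀ L 0 x := k_nonneg hc₀ L 0 x
    nlinarith
  have hΨint : IntegrableOn Ψ (Ici (0:ℝ)) := by
    refine Integrable.mono' (integrableOn_g (L := L) hc₀) hΨmeas ?_
    filter_upwards [ae_restrict_mem measurableSet_Ici] with x hx
    rw [Real.norm_eq_abs, abs_of_nonneg (hΨ0 x)]
    exact hΨle x hx
  have hk0int : IntegrableOn (fun x => max (k c₀ L 0 x - u) 0) (Ici (0:ℝ)) :=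
    integrableOn_max_k hc₀ hu le_rfl
  -- step 1 : pointwise bound integrated
  have step1 : ∫ x in Ici (0:ℝ), max (c₀ * Real.exp (-x) * (x - L) ^ 2 - u) 0 ≤
      ∫ x in Ici (0:ℝ), ((1 - q₀) * max (k c₀ L 0 x - u) 0 + Ψ x) := by
    have hLHSint : IntegrableOn (fun x => max (c₀ * Real.exp (-x) * (x - L) ^ 2 - u) 0)
        (Ici (0:ℝ)) := by
      refine Integrable.mono' (integrableOn_g (L := L) hc₀) ?_ ?_
      · refine Measurable.aestronglyMeasurable ?_
        apply Measurable.max _ measurable_const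
        apply Measurable.sub _ measurable_const
        exact ((Real.measurable_exp.comp measurable_neg).const_mul c₀).mul
          ((measurable_id.sub measurable_const).pow_const 2)
      · refine Eventually.of_forall fun x => ?_
        rw [Real.norm_eq_abs, abs_of_nonneg (le_max_right _ _)]
        have : (0:ℝ) ≤ c₀ * Real.exp (-x) * (x - L) ^ 2 := by positivity
        exact max_le (by linarith) this
    exact setIntegral_mono_on hLHSint ((hk0int.const_mul _).add hΨint) measurableSet_Ici hmax
  have step2 : ∫ x in Ici (0:ℝ), ((1 - q₀) * max (k c₀ L 0 x - u) 0 + Ψ x) =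
      (1 - q₀) * (∫ x in Ici (0:ℝ), max (k c₀ L 0 x - u) 0) + ∫ x in Ici (0:ℝ), Ψ x := by
    rw [integral_add (hk0int.const_mul _) hΨint, integral_const_mul]
  have step3 : ∫ x in Ici (0:ℝ), max (k c₀ L 0 x - u) 0 ≤ F :=
    component_bound hc₀ hL0 hu le_rfl hL0
  have step4 : ∫ x in Ici (0:ℝ), Ψ x ≤ F * q₀ := by
    have hsw := swap_bound measurableSet_Ioc
      (fun x p => max (k c₀ L p x - u) 0 * w p) (fun p => F * w p) hjm
      (fun x p hp => mul_nonneg (le_max_right _ _) (hw0 p hp))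
      (fun p hp => mul_nonneg hF0 (hw0 p hp))
      (hwint.const_mul F)
      (fun p hp => (integrableOn_max_k hc₀ hu hp.1.le).mul_const _)
      ?_
    · calc ∫ x in Ici (0:ℝ), Ψ x ≤ ∫ p in Ioc (0:ℝ) L, F * w p := hsw
        _ = F * q₀ := by rw [integral_const_mul, hmass]
    · intro p hp
      rw [integral_mul_const]
      exact mul_le_mul_of_nonneg_right (component_bound hc₀ hL0 hu hp.1.le hp.2) (hw0 p hp)
  calc ∫ x in Ici (0:ℝ), max (c₀ * Real.exp (-x) * (x - L) ^ 2 - u) 0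
      ≤ (1 - q₀) * (∫ x in Ici (0:ℝ), max (k c₀ L 0 x - u) 0) + ∫ x in Ici (0:ℝ), Ψ x := by
        rw [← step2]; exact step1
    _ ≤ (1 - q₀) * F + F * q₀ := by
        refine add_le_add ?_ step4
        exact mul_le_mul_of_nonneg_left step3 (by linarith)
    _ = F := by ring


end F0M
end

/-- For every `t ∈ [0,1]`, `f₀(x) = e^{−x}` majorizes
`g_t(x) = ((t+1)/2) e^{−x} (x − 1 + √((1−t)/(1+t)))²` on ℝ₊. -/
theorem f0_majorizes_gt (t : ℝ) (ht₀ : 0 ≤ t) (ht₁ : t ≤ 1) :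
    (∀ u : ℝ, 0 ≤ u →
      ∫ x in Ici (0:ℝ),
          max ((t + 1) / 2 * exp (-x) * (x - 1 + Real.sqrt ((1 - t) / (1 + t)))^2 - u) 0 ≤
        ∫ x in Ici (0:ℝ), max (exp (-x) - u) 0) ∧
    ∫ x in Ici (0:ℝ), (t + 1) / 2 * exp (-x) * (x - 1 + Real.sqrt ((1 - t) / (1 + t)))^2 =
      ∫ x in Ici (0:ℝ), exp (-x) := by
  have h1t : (0:ℝ) < 1 + t := by linarith
  have harg0 : 0 ≤ (1 - t) / (1 + t) := div_nonneg (by linarith) h1t.le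
  have harg1 : (1 - t) / (1 + t) ≤ 1 := by
    rw [div_le_one h1t]; linarith
  set s : ℝ := Real.sqrt ((1 - t) / (1 + t)) with hsdef
  have hs0 : 0 ≤ s := Real.sqrt_nonneg _
  have hs1 : s ≤ 1 := by
    rw [hsdef]
    exact Real.sqrt_le_one.mpr harg1
  have hs2 : s ^ 2 = (1 - t) / (1 + t) := Real.sq_sqrt harg0
  set c₀ : ℝ := (t + 1) / 2 with hc₀def
  set L : ℝ := 1 - s with hLdef
  have hc₀ : 0 < c₀ := by
    rw [hc₀def]; linarith
  have hL0 : 0 ≤ L := by rw [hLdef]; linarith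
  have hL1 : L ≤ 1 := by rw [hLdef]; linarith
  have hc : c₀ * ((1 - L) ^ 2 + 1) = 1 := by
    have h1 : 1 - L = s := by rw [hLdef]; ring
    rw [h1, hs2, hc₀def]
    field_simp
    ring
  have hcongr : ∀ x : ℝ, c₀ * exp (-x) * (x - 1 + s) ^ 2 = c₀ * Real.exp (-x) * (x - L) ^ 2 := by
    intro x
    rw [hLdef]
    ring
  constructor
  · intro u hu
    have hmain := F0M.main_ineq hc₀ hL0 hL1 hc hu
    simp_rw [hcongr]
    exact hmain
  · simp_rw [hcongr]
    rw [F0M.integral_g_Ici hc₀ hc, integral_Ici_eq_integral_Ioi, integral_exp_neg_Ioi_zero]
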